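/- Let H be a real inner product space, T ∈ (0, +∞], and let w : [0,T) → H be differentiable. Let φ, ε : [0,T) → ℝ with ε(t) ≥ 0 for all t, and assume: (a) ⟨w'(t), w(t)⟩ ≤ φ(t)·‖w(t)‖² + ε(t)·‖w(t)‖ for every t ∈ [0,T); (b) ‖w'(t)‖ ≤ ε(t) for every t ∈ [0,T) with w(t) = 0. Then the function t ↦ ‖w(t)‖ satisfies, at every t ∈ [0,T), the Dini-derivative inequality d⁺‖w(·)‖(t) := limsup_{h→0⁺} (‖w(t+h)‖ − ‖w(t)‖)/h ≤ φ(t)·‖w(t)‖ + ε(t). -/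

import Mathlib

open Filter Real

private lemma limsup_le_of_tendsto_aux {q : ℝ → ℝ} {L M : ℝ}
    (hq : Filter.Tendsto q (nhdsWithin 0 (Set.Ioi 0)) (nhds L)) (hLM : L ≤ M) :
    Filter.limsup (fun h : ℝ => ((q h : EReal))) (nhdsWithin 0 (Set.Ioi 0))
      ≤ (M : EReal) := by
  have h2 : Filter.Tendsto (fun h : ℝ => ((q h : EReal))) (nhdsWithin 0 (Set.Ioi 0))
      (nhds (L : EReal)) := (continuous_coe_real_ereal.tendsto L).comp hq
  rw [h2.limsup_eq]
  exact_mod_cast hLM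

/-- Dini-derivative inequality for the norm of a differentiable
curve in a real inner product space (core of the paper's Lemma 4.2). -/
theorem dini_deriv_norm_le
    {H : Type*} [NormedAddCommGroup H] [InnerProductSpace ℝ H]
    (T : EReal) (hT : 0 < T)
    (w w' : ℝ → H) (φ ε : ℝ → ℝ)
    (hw : ∀ t ∈ {t : ℝ | 0 ≤ t ∧ (t : EReal) < T},
      HasDerivWithinAt w (w' t) {t : ℝ | 0 ≤ t ∧ (t : EReal) < T} t)
    (hε : ∀ t ∈ {t : ℝ | 0 ≤ t ∧ (t : EReal) < T}, 0 ≤ ε t)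
    (ha : ∀ t ∈ {t : ℝ | 0 ≤ t ∧ (t : EReal) < T},
      (inner ℝ (w' t) (w t) : ℝ) ≤ φ t * ‖w t‖ ^ 2 + ε t * ‖w t‖)
    (hb : ∀ t ∈ {t : ℝ | 0 ≤ t ∧ (t : EReal) < T}, w t = 0 → ‖w' t‖ ≤ ε t) :
    ∀ t ∈ {t : ℝ | 0 ≤ t ∧ (t : EReal) < T},
      Filter.limsup (fun h : ℝ => (((‖w (t + h)‖ - ‖w t‖) / h : ℝ) : EReal))
          (nhdsWithin 0 (Set.Ioi 0))
        ≤ ((φ t * ‖w t‖ + ε t : ℝ) : EReal) := by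
  intro t ht
  set S : Set ℝ := {t : ℝ | 0 ≤ t ∧ (t : EReal) < T} with hS
  -- the map h ↦ t + h sends 𝓝[>]0 into 𝓝[S \ {t}] t
  have htends : Filter.Tendsto (fun h : ℝ => t + h) (nhdsWithin 0 (Set.Ioi 0))
      (nhdsWithin t (S \ {t})) := by
    rw [tendsto_nhdsWithin_iff]
    have hadd : Filter.Tendsto (fun h : ℝ => t + h) (nhds (0:ℝ)) (nhds t) := by
      have h0 : Filter.Tendsto (fun h : ℝ => t + h) (nhds (0:ℝ)) (nhds (t + 0)) :=
        Filter.Tendsto.const_add t Filter.tendsto_id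
      simpa using h0
    constructor
    · exact hadd.mono_left nhdsWithin_le_nhds
    · have hopen : IsOpen {x : ℝ | (x : EReal) < T} :=
        isOpen_Iio.preimage continuous_coe_real_ereal
      have hmemT : {x : ℝ | (x : EReal) < T} ∈ nhds t := hopen.mem_nhds ht.2
      have h1 : ∀ᶠ h : ℝ in nhds 0, ((t + h : ℝ) : EReal) < T := by
        exact hadd hmemT
      filter_upwards [self_mem_nhdsWithin, h1.filter_mono nhdsWithin_le_nhds]
        with h hh hlt
      have hh0 : (0 : ℝ) < h := hh
      refine ⟨⟨by linarith [ht.1], hlt⟩, ?_⟩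
      simp only [Set.mem_singleton_iff]
      intro habs
      have : h = 0 := by linarith [congrArg (· - t) habs, add_sub_cancel_left t h]
      linarith
  by_cases hz : w t = 0
  · -- case w t = 0 : quotient tends to ‖w' t‖ ≤ ε t
    have hslope : Filter.Tendsto (fun h : ℝ => slope w t (t + h))
        (nhdsWithin 0 (Set.Ioi 0)) (nhds (w' t)) :=
      (hasDerivWithinAt_iff_tendsto_slope.1 (hw t ht)).comp htends
    have hnorm : Filter.Tendsto (fun h : ℝ => ‖slope w t (t + h)‖)
        (nhdsWithin 0 (Set.Ioi 0)) (nhds ‖w' t‖) := hslope.norm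
    have heq : (fun h : ℝ => ‖slope w t (t + h)‖)
        =ᶠ[nhdsWithin 0 (Set.Ioi 0)] fun h => (‖w (t + h)‖ - ‖w t‖) / h := by
      filter_upwards [self_mem_nhdsWithin] with h hh
      have hh0 : (0 : ℝ) < h := hh
      have : slope w t (t + h) = h⁻¹ • (w (t + h) - w t) := by
        simp [slope, add_sub_cancel_left]
      rw [this, hz]
      simp [norm_smul, abs_of_pos hh0, div_eq_inv_mul]
    have hq : Filter.Tendsto (fun h : ℝ => (‖w (t + h)‖ - ‖w t‖) / h)
        (nhdsWithin 0 (Set.Ioi 0)) (nhds ‖w' t‖) := hnorm.congr' heq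
    refine limsup_le_of_tendsto_aux hq ?_
    have := hb t ht hz
    rw [hz]
    simp only [norm_zero, mul_zero, zero_add]
    linarith
  · -- case w t ≠ 0 : norm is differentiable at t within S
    have hne : ‖w t‖ ≠ 0 := norm_ne_zero_iff.2 hz
    have hpos : (0 : ℝ) < ‖w t‖ := norm_pos_iff.2 hz
    have hne2 : (‖w t‖ ^ 2 : ℝ) ≠ 0 := pow_ne_zero 2 hne
    have hd1 : HasDerivWithinAt (fun s => ‖w s‖ ^ 2)
        (2 * (inner ℝ (w t) (w' t) : ℝ)) S t := (hw t ht).norm_sq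
    have hd2 := hd1.sqrt hne2
    have hfun : (fun y => Real.sqrt (‖w y‖ ^ 2)) = fun y => ‖w y‖ :=
      funext fun y => Real.sqrt_sq (norm_nonneg _)
    rw [Real.sqrt_sq (norm_nonneg _)] at hd2
    have hd3 : HasDerivWithinAt (fun s => ‖w s‖)
        (2 * (inner ℝ (w t) (w' t) : ℝ) / (2 * ‖w t‖)) S t := hfun ▸ hd2
    set D : ℝ := 2 * (inner ℝ (w t) (w' t) : ℝ) / (2 * ‖w t‖) with hD
    have hslope : Filter.Tendsto (fun h : ℝ => slope (fun s => ‖w s‖) t (t + h))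
        (nhdsWithin 0 (Set.Ioi 0)) (nhds D) :=
      (hasDerivWithinAt_iff_tendsto_slope.1 hd3).comp htends
    have heq : (fun h : ℝ => slope (fun s => ‖w s‖) t (t + h))
        =ᶠ[nhdsWithin 0 (Set.Ioi 0)] fun h => (‖w (t + h)‖ - ‖w t‖) / h := by
      filter_upwards [self_mem_nhdsWithin] with h hh
      simp [slope, add_sub_cancel_left, div_eq_inv_mul]
    have hq : Filter.Tendsto (fun h : ℝ => (‖w (t + h)‖ - ‖w t‖) / h)
        (nhdsWithin 0 (Set.Ioi 0)) (nhds D) := hslope.congr' heq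
    refine limsup_le_of_tendsto_aux hq ?_
    have hinner : (inner ℝ (w t) (w' t) : ℝ) ≤ φ t * ‖w t‖ ^ 2 + ε t * ‖w t‖ := by
      rw [real_inner_comm]; exact ha t ht
    rw [hD, div_le_iff₀ (by positivity)]
    nlinarith [hpos]
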